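/- Let M be a matroid of rank r on a finite ground set E, and let 𝓗 be a collection of subsets of E. Then 𝓗 is the collection of rank-r flats of an erection of M if and only if: (1) every H ∈ 𝓗 has rank r in M; (2) every H ∈ 𝓗 is (r−1)-closed in M; and (3) every basis of M is contained in exactly one member of 𝓗. -/

import Mathlib

open Matroid Set Filter Real

namespace PavingEnum

/-- The rank of a matroid: the largest cardinality of a base. -/
noncomputable def mrk {α : Type*} (M : Matroid α) : ℕ :=
  sSup {n : ℕ | ∃ B, M.IsBase B ∧ B.ncard = n}

/-- The rank of a set in a matroid: the largest cardinality of an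
independent subset of the set. -/
noncomputable def mrnk {α : Type*} (M : Matroid α) (X : Set α) : ℕ :=
  sSup {n : ℕ | ∃ I, I ⊆ X ∧ M.Indep I ∧ I.ncard = n}

/-- A circuit is a minimal dependent set. -/
def IsCircuit {α : Type*} (M : Matroid α) (C : Set α) : Prop :=
  M.Dep C ∧ ∀ D, D ⊂ C → M.Indep D

/-- A matroid of rank `r` is paving if every circuit has cardinality at least `r`. -/
def Paving {α : Type*} (M : Matroid α) : Prop :=
  ∀ C, IsCircuit M C → (mrk M : ℕ∞) ≤ C.encard

/-- A matroid is sparse paving if both it and its dual are paving. -/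
def SparsePaving {α : Type*} (M : Matroid α) : Prop :=
  Paving M ∧ Paving M✶

/-- `numMatroids n r` : the number of matroids on the ground set `{1, …, n}` of rank `r`. -/
noncomputable def numMatroids (n r : ℕ) : ℕ :=
  {M : Matroid (Fin n) | M.E = Set.univ ∧ mrk M = r}.ncard

/-- `numPaving n r` : the number of paving matroids on `{1, …, n}` of rank `r`. -/
noncomputable def numPaving (n r : ℕ) : ℕ :=
  {M : Matroid (Fin n) | M.E = Set.univ ∧ mrk M = r ∧ Paving M}.ncard

/-- `numSparsePaving n r` : the number of sparse paving matroids on `{1, …, n}` of rank `r`. -/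
noncomputable def numSparsePaving (n r : ℕ) : ℕ :=
  {M : Matroid (Fin n) | M.E = Set.univ ∧ mrk M = r ∧ SparsePaving M}.ncard

end PavingEnum

namespace PavingEnum

/-- `T` is the truncation of `N`: same ground set, and the independent sets of `T`
are exactly the independent sets of `N` of cardinality at most `rk N − 1`. -/
def IsTruncationOf {α : Type*} (T N : Matroid α) : Prop :=
  T.E = N.E ∧ ∀ I : Set α, T.Indep I ↔ (N.Indep I ∧ I.ncard + 1 ≤ mrk N)

/-- `N` is an erection of `M` if `T(N) = M` or `N = M`. -/
def IsErection {α : Type*} (N M : Matroid α) : Prop :=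
  IsTruncationOf M N ∨ N = M

/-- A set `X` is `k`-closed in `M` if it contains the closure of each of its
subsets of cardinality at most `k`. -/
def KClosed {α : Type*} (M : Matroid α) (k : ℕ) (X : Set α) : Prop :=
  ∀ Y ⊆ X, Y.encard ≤ (k : ℕ∞) → M.closure Y ⊆ X

/-- The `k`-closure of a set: the intersection of all `k`-closed sets containing it. -/
def kClosure {α : Type*} (M : Matroid α) (k : ℕ) (X : Set α) : Set α :=
  ⋂₀ {Y | KClosed M k Y ∧ X ⊆ Y}

/-- A flat `F` of `M` of rank `k` is essential if the restriction `M|F` has a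
nontrivial erection, i.e. there is a matroid on ground set `F` of rank `k+1`
whose truncation is `M|F`. -/
def IsEssentialFlat {α : Type*} (M : Matroid α) (F : Set α) : Prop :=
  M.IsFlat F ∧ ∃ N : Matroid α, N.E = F ∧ mrk N = mrnk M F + 1 ∧ IsTruncationOf (M ↾ F) N

end PavingEnum

open PavingEnum

namespace PavingEnum

open Set

variable {α : Type*} {M N : Matroid α} {I J B B' X F H : Set α} {r : ℕ}


lemma mrk_eq_ncard_base (hB : M.IsBase B) : mrk M = B.ncard := by
  have key : ∀ n ∈ {n : ℕ | ∃ B', M.IsBase B' ∧ B'.ncard = n}, n = B.ncard := by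
    rintro n ⟨B', hB', rfl⟩; exact hB'.ncard_eq_ncard_of_isBase hB
  apply le_antisymm
  · exact csSup_le ⟨B.ncard, B, hB, rfl⟩ (fun n hn => (key n hn).le)
  · exact le_csSup ⟨B.ncard, fun n hn => (key n hn).le⟩ ⟨B, hB, rfl⟩

lemma indep_ncard_le_mrk (hE : M.E.Finite) (hI : M.Indep I) : I.ncard ≤ mrk M := by
  obtain ⟨B, hB, hIB⟩ := hI.exists_isBase_superset
  rw [mrk_eq_ncard_base hB]
  exact ncard_le_ncard hIB (hE.subset hB.subset_ground)

lemma base_of_indep_mrk_le (hE : M.E.Finite) (hI : M.Indep I) (h : mrk M ≤ I.ncard) :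
    M.IsBase I := by
  obtain ⟨B, hB, hIB⟩ := hI.exists_isBase_superset
  have hBfin : B.Finite := hE.subset hB.subset_ground
  have : B.ncard ≤ I.ncard := (mrk_eq_ncard_base hB) ▸ h
  rwa [eq_of_subset_of_ncard_le hIB this hBfin] at hI ⊢

lemma mrnk_eq_ncard_basis (hE : M.E.Finite) (hI : M.IsBasis I X) : mrnk M X = I.ncard := by
  have hX : X ⊆ M.E := hI.subset_ground
  have key : ∀ n ∈ {n : ℕ | ∃ J, J ⊆ X ∧ M.Indep J ∧ J.ncard = n}, n ≤ I.ncard := by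
    rintro n ⟨J, hJX, hJ, rfl⟩
    obtain ⟨I', hI'2, hJI'⟩ := hJ.subset_isBasis_of_subset hJX hX
    calc J.ncard ≤ I'.ncard := ncard_le_ncard hJI' (hE.subset hI'2.indep.subset_ground)
      _ = I.ncard := by
          have := hI'2.encard_eq_encard hI
          rw [ncard_def, this, ← ncard_def]
  apply le_antisymm
  · exact csSup_le ⟨I.ncard, I, hI.subset, hI.indep, rfl⟩ key
  · exact le_csSup ⟨I.ncard, key⟩ ⟨I, hI.subset, hI.indep, rfl⟩

lemma flat_mrnk_eq_ground (hE : M.E.Finite) (hF : M.IsFlat F) (h : mrnk M F = mrk M) :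
    F = M.E := by
  obtain ⟨I, hI⟩ := M.exists_isBasis F hF.subset_ground
  have : M.IsBase I := base_of_indep_mrk_le hE hI.indep
    (by rw [← h, mrnk_eq_ncard_basis hE hI])
  have h2 : M.E ⊆ M.closure I := by rw [this.closure_eq]
  exact subset_antisymm hF.subset_ground
    (h2.trans ((M.closure_subset_closure hI.subset).trans (by rw [hF.closure])))



variable {α : Type*} {M N : Matroid α} {I J B B' X F H : Set α} {r : ℕ}

lemma flat_closure (M : Matroid α) (X : Set α) : M.IsFlat (M.closure X) := by
  refine ⟨fun I Y hIF hIY => hIY.subset_closure.trans ?_, M.closure_subset_ground X⟩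
  have := hIF.closure_eq_closure
  rw [closure_closure] at this
  rw [this]

lemma mrnk_ground_eq (hE : M.E.Finite) : mrnk M M.E = mrk M := by
  obtain ⟨B, hB⟩ := M.exists_isBase
  rw [mrnk_eq_ncard_basis hE hB.isBasis_ground, mrk_eq_ncard_base hB]

lemma flats_rank_eq (hE : M.E.Finite) (hrk : mrk M = r) :
    {F : Set α | M.IsFlat F ∧ mrnk M F = r} = {M.E} := by
  ext F; simp only [mem_setOf_eq, mem_singleton_iff]
  constructor
  · rintro ⟨hF, hFr⟩; exact flat_mrnk_eq_ground hE hF (by rw [hFr, hrk])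
  · rintro rfl; exact ⟨M.ground_isFlat, by rw [mrnk_ground_eq hE, hrk]⟩

lemma trunc_mrk (hT : IsTruncationOf M N) (hE : M.E.Finite) (hrk : mrk M = r) :
    mrk N = r + 1 := by
  have hNE : N.E.Finite := hT.1 ▸ hE
  have h1 : 1 ≤ mrk N := by
    by_contra h
    have h0 : mrk N = 0 := by omega
    have := (hT.2 ∅).mp M.empty_indep
    omega
  -- lower bound : a base of M is N-indep with ncard + 1 ≤ mrk N, extend to a base of N?
  have hub : mrk N ≤ r + 1 := by
    by_contra hcon
    push_neg at hcon
    obtain ⟨BN, hBN⟩ := N.exists_isBase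
    have hBNfin : BN.Finite := hNE.subset hBN.subset_ground
    have hBNcard : BN.ncard = mrk N := (mrk_eq_ncard_base hBN).symm
    obtain ⟨J, hJBN, hJcard⟩ : ∃ J ⊆ BN, J.ncard = r + 1 :=
      Set.exists_subset_card_eq (by omega)
    have hJind : M.Indep J := (hT.2 J).mpr ⟨hBN.indep.subset hJBN, by omega⟩
    have := indep_ncard_le_mrk hE hJind
    omega
  have hlb : r + 1 ≤ mrk N := by
    obtain ⟨B, hB⟩ := M.exists_isBase
    have := (hT.2 B).mp hB.indep
    have hBcard : B.ncard = r := by rw [← hrk, mrk_eq_ncard_base hB]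
    omega
  omega


end PavingEnum


/-- Crapo's theorem: for a matroid M of rank r ≥ 1 on a finite ground set E and a
collection 𝓗 of subsets of E, 𝓗 is the collection of rank-r flats of an erection
of M if and only if (1) each H ∈ 𝓗 has rank r in M, (2) each H ∈ 𝓗 is
(r−1)-closed in M, and (3) each basis of M is contained in exactly one member of 𝓗. -/
theorem crapo_erection_characterisation {α : Type*} (M : Matroid α) (r : ℕ)
    (hE : M.E.Finite) (hrk : mrk M = r) (hr : 1 ≤ r)
    (𝓗 : Set (Set α)) (h𝓗 : ∀ H ∈ 𝓗, H ⊆ M.E) :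
    (∃ N : Matroid α, IsErection N M ∧ 𝓗 = {F : Set α | N.IsFlat F ∧ mrnk N F = r}) ↔
      ((∀ H ∈ 𝓗, mrnk M H = r) ∧
        (∀ H ∈ 𝓗, KClosed M (r - 1) H) ∧
        (∀ B : Set α, M.IsBase B → ∃! H, H ∈ 𝓗 ∧ B ⊆ H)) := by
  constructor
  · rintro ⟨N, hErN, rfl⟩
    obtain hT | rfl := hErN
    · -- truncation case
      have hEe := hT.1
      have hNfin : N.E.Finite := hEe ▸ hE
      have hmrkN : mrk N = r + 1 := trunc_mrk hT hE hrk
      have hMI : ∀ I : Set α, M.Indep I ↔ (N.Indep I ∧ I.ncard ≤ r) := by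
        intro I; rw [hT.2 I, hmrkN]; exact and_congr_right fun _ => by omega
      refine ⟨?_, ?_, ?_⟩
      · rintro H ⟨hHf, hHr⟩
        obtain ⟨IH, hIH⟩ := N.exists_isBasis H hHf.subset_ground
        have hIHcard : IH.ncard = r := by
          rw [mrnk_eq_ncard_basis hNfin hIH] at hHr; exact hHr
        have hIHM : M.Indep IH := (hMI _).mpr ⟨hIH.indep, by omega⟩
        have hIHbase : M.IsBase IH := base_of_indep_mrk_le hE hIHM (by rw [hrk, hIHcard])
        have hbas : M.IsBasis IH H := Matroid.isBasis_iff_indep_closure.mpr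
          ⟨hIHM, by rw [hIHbase.closure_eq, hEe]; exact hHf.subset_ground, hIH.subset⟩
        rw [mrnk_eq_ncard_basis hE hbas, hIHcard]
      · rintro H ⟨hHf, hHr⟩ Y hYH hYcard
        have hYE : Y ⊆ M.E := hYH.trans (hEe ▸ hHf.subset_ground)
        obtain ⟨IY, hIY⟩ := M.exists_isBasis Y hYE
        have hIYfin : IY.Finite := hE.subset hIY.indep.subset_ground
        have hIYcard : IY.ncard ≤ r - 1 := by
          have h1 : (IY.ncard : ℕ∞) ≤ ((r-1:ℕ) : ℕ∞) := by
            rw [hIYfin.cast_ncard_eq]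
            exact (Set.encard_mono hIY.subset).trans hYcard
          exact_mod_cast h1
        rw [← hIY.closure_eq_closure]
        intro e he
        have heE : e ∈ M.E := M.closure_subset_ground _ he
        by_cases heI : e ∈ IY
        · exact hYH (hIY.subset heI)
        · have hNind : N.Indep IY := ((hMI IY).mp hIY.indep).1
          have hdep : M.Dep (insert e IY) :=
            (hIY.indep.mem_closure_iff_of_notMem heI).mp he
          have hcard : (insert e IY).ncard ≤ r := by
            rw [Set.ncard_insert_of_notMem heI hIYfin]; omega
          have hnind : ¬ N.Indep (insert e IY) := fun h =>
            hdep.not_indep ((hMI _).mpr ⟨h, hcard⟩)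
          have heN : e ∈ N.closure IY := by
            rw [hNind.mem_closure_iff_of_notMem heI]
            exact (N.dep_iff).mpr ⟨hnind,
              Set.insert_subset (hEe ▸ heE) hNind.subset_ground⟩
          have : N.closure IY ⊆ H := by
            rw [← hHf.closure]
            exact N.closure_subset_closure (hIY.subset.trans hYH)
          exact this heN
      · intro B hB
        have hBN : N.Indep B := ((hMI B).mp hB.indep).1
        have hBcard : B.ncard = r := by rw [← hrk, mrk_eq_ncard_base hB]
        refine ⟨N.closure B, ⟨⟨flat_closure N B, ?_⟩,
          N.subset_closure B (hEe ▸ hB.subset_ground)⟩, ?_⟩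
        · rw [mrnk_eq_ncard_basis hNfin hBN.isBasis_closure, hBcard]
        · rintro H ⟨⟨hHf, hHr⟩, hBH⟩
          obtain ⟨J, hJ, hBJ⟩ := hBN.subset_isBasis_of_subset hBH hHf.subset_ground
          have hJcard : J.ncard = r := by
            rw [mrnk_eq_ncard_basis hNfin hJ] at hHr; exact hHr
          have hJB : B = J := eq_of_subset_of_ncard_le hBJ (by omega)
            (hNfin.subset hJ.indep.subset_ground)
          refine subset_antisymm ?_ ?_
          · have := hJ.subset_closure
            rwa [← hJB] at this
          · rw [← hHf.closure]
            exact N.closure_subset_closure hBH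
    · -- N = M
      rw [flats_rank_eq hE hrk]
      refine ⟨?_, ?_, ?_⟩
      · intro H hH; rw [Set.mem_singleton_iff] at hH; subst hH
        rw [mrnk_ground_eq hE, hrk]
      · intro H hH Y hY hYc; rw [Set.mem_singleton_iff] at hH; subst hH
        exact N.closure_subset_ground Y
      · intro B hB
        exact ⟨N.E, ⟨rfl, hB.subset_ground⟩, fun H h => h.1⟩
  · rintro ⟨h1, h2, h3⟩
    have hbase_card : ∀ B, M.IsBase B → B.ncard = r := fun B hB => by
      rw [← hrk, mrk_eq_ncard_base hB]
    by_cases hEH : M.E ∈ 𝓗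
    · -- trivial case : 𝓗 = {M.E}
      have h𝓗eq : 𝓗 = {M.E} := by
        apply subset_antisymm
        · intro H hH
          obtain ⟨IH, hIH⟩ := M.exists_isBasis H (h𝓗 H hH)
          have hIHcard : IH.ncard = r := by
            have := h1 H hH; rwa [mrnk_eq_ncard_basis hE hIH] at this
          have hIHbase : M.IsBase IH := base_of_indep_mrk_le hE hIH.indep
            (by rw [hrk, hIHcard])
          rw [Set.mem_singleton_iff]
          exact (h3 IH hIHbase).unique ⟨hH, hIH.subset⟩ ⟨hEH, hIHbase.subset_ground⟩
        · intro H hH; rw [Set.mem_singleton_iff] at hH; subst hH; exact hEH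
      exact ⟨M, Or.inr rfl, by rw [flats_rank_eq hE hrk, h𝓗eq]⟩
    · -- main construction
      set NI : Set α → Prop := fun I => M.Indep I ∨
        (I ⊆ M.E ∧ (∃ e ∈ I, M.IsBase (I \ {e})) ∧ ∀ H ∈ 𝓗, ¬ I ⊆ H) with hNI_def
      have hNIcard : ∀ I, NI I → I.ncard ≤ r + 1 := by
        rintro I (hI | ⟨hIE, ⟨e, heI, hBase⟩, -⟩)
        · have := indep_ncard_le_mrk hE hI; omega
        · have hfin : I.Finite := hE.subset hIE
          have h1' : (I \ {e}).ncard + 1 = I.ncard :=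
            Set.ncard_diff_singleton_add_one heI hfin
          have := hbase_card _ hBase; omega
      have hNIsecond_card : ∀ I, I ⊆ M.E → (∃ e ∈ I, M.IsBase (I \ {e})) →
          I.ncard = r + 1 := by
        rintro I hIE ⟨e, heI, hBase⟩
        have hfin : I.Finite := hE.subset hIE
        have h1' : (I \ {e}).ncard + 1 = I.ncard :=
          Set.ncard_diff_singleton_add_one heI hfin
        have := hbase_card _ hBase; omega
      have hstep : ∀ B e H0, M.IsBase B → H0 ∈ 𝓗 → B ⊆ H0 → e ∈ M.E → e ∉ H0 →
          NI (insert e B) := by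
        intro B e H0 hB hH0 hBH0 heE heH0
        have heB : e ∉ B := fun h => heH0 (hBH0 h)
        refine Or.inr ⟨Set.insert_subset heE hB.subset_ground,
          ⟨e, Set.mem_insert _ _, by rwa [Set.insert_diff_self_of_notMem heB]⟩, ?_⟩
        intro H hH hsub
        have hBH : B ⊆ H := (Set.subset_insert _ _).trans hsub
        have : H = H0 := (h3 B hB).unique ⟨hH, hBH⟩ ⟨hH0, hBH0⟩
        exact heH0 (this ▸ hsub (Set.mem_insert _ _))
      have hsub_ind : ∀ ⦃I J : Set α⦄, NI J → I ⊆ J → NI I := by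
        rintro I J (hJ | ⟨hJE, ⟨e, heJ, hBase⟩, hnotin⟩) hIJ
        · exact Or.inl (hJ.subset hIJ)
        · by_cases hIJ' : I = J
          · subst hIJ'; exact Or.inr ⟨hJE, ⟨e, heJ, hBase⟩, hnotin⟩
          · obtain ⟨f, hfJ, hfI⟩ := Set.exists_of_ssubset ⟨hIJ, fun h => hIJ' (hIJ.antisymm h)⟩
            have hIJf : I ⊆ J \ {f} := Set.subset_diff_singleton hIJ hfI
            suffices hind : M.Indep (J \ {f}) from Or.inl (hind.subset hIJf)
            by_cases hfe : f = e
            · subst hfe; exact hBase.indep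
            · have hfB : f ∈ J \ {e} := ⟨hfJ, hfe⟩
              have heB : e ∉ J \ {e} := fun h => h.2 rfl
              have hJeq : J = insert e (J \ {e}) := by
                rw [Set.insert_diff_singleton, Set.insert_eq_self.mpr heJ]
              have hJf : J \ {f} = insert e ((J \ {e}) \ {f}) := by
                rw [Set.insert_diff_singleton_comm (Ne.symm hfe), ← hJeq]
              rw [hJf]
              have hBf_ind : M.Indep ((J \ {e}) \ {f}) :=
                hBase.indep.subset Set.diff_subset
              have heBf : e ∉ (J \ {e}) \ {f} := fun h => heB h.1
              rw [hBf_ind.insert_indep_iff_of_notMem heBf]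
              refine ⟨hJE heJ, fun hecl => ?_⟩
              obtain ⟨H0, ⟨hH0, hBH0⟩, -⟩ := h3 _ hBase
              have hcl : M.closure ((J \ {e}) \ {f}) ⊆ H0 := by
                refine h2 H0 hH0 _ (Set.diff_subset.trans hBH0) ?_
                have hc1 : ((J \ {e}) \ {f}).ncard = r - 1 := by
                  rw [Set.ncard_diff_singleton_of_mem hfB]
                  rw [hbase_card _ hBase]
                have hfin : ((J \ {e}) \ {f}).Finite :=
                  hE.subset (Set.diff_subset.trans hBase.subset_ground)
                rw [← hfin.cast_ncard_eq, hc1]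
              have hJH0 : J ⊆ H0 := by
                rw [hJeq]
                exact Set.insert_subset (hcl hecl) hBH0
              exact hnotin H0 hH0 hJH0
      have haug : ∀ ⦃I J : Set α⦄, NI I → NI J → I.ncard < J.ncard →
          ∃ e ∈ J, e ∉ I ∧ NI (insert e I) := by
        rintro I J hI hJ hIJ
        have hJle := hNIcard J hJ
        rcases hI with hIM | hIsec
        · have hIfin : I.Finite := hE.subset hIM.subset_ground
          have hIle : I.ncard ≤ r := by have := indep_ncard_le_mrk hE hIM; omega
          rcases hJ with hJM | ⟨hJE, ⟨e, heJ, hBase⟩, hnotin⟩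
          · have hJfin : J.Finite := hE.subset hJM.subset_ground
            obtain ⟨x, hx, hind⟩ := hIM.augment hJM
              (by rw [← hIfin.cast_ncard_eq, ← hJfin.cast_ncard_eq]; exact_mod_cast hIJ)
            exact ⟨x, hx.1, hx.2, Or.inl hind⟩
          · rcases lt_or_ge I.ncard r with hlt | hge
            · have hBfin : (J \ {e}).Finite :=
                hE.subset hBase.subset_ground
              obtain ⟨x, hx, hind⟩ := hIM.augment hBase.indep
                (by rw [← hIfin.cast_ncard_eq, ← hBfin.cast_ncard_eq,
                    hbase_card _ hBase]; exact_mod_cast hlt)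
              exact ⟨x, hx.1.1, hx.2, Or.inl hind⟩
            · have hIr : I.ncard = r := le_antisymm hIle hge
              have hIbase : M.IsBase I := base_of_indep_mrk_le hE hIM (by omega)
              obtain ⟨H0, ⟨hH0, hIH0⟩, -⟩ := h3 I hIbase
              obtain ⟨f, hfJ, hfH0⟩ := Set.not_subset.mp (hnotin H0 hH0)
              exact ⟨f, hfJ, fun h => hfH0 (hIH0 h),
                hstep I f H0 hIbase hH0 hIH0 (hJE hfJ) hfH0⟩
        · have := hNIsecond_card I hIsec.1 hIsec.2.1; omega
      have hground : ∀ ⦃I : Set α⦄, NI I → I ⊆ M.E := by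
        rintro I (hI | hI); exacts [hI.subset_ground, hI.1]
      set N : Matroid α := (IndepMatroid.ofFinite hE NI (Or.inl M.empty_indep)
        hsub_ind haug hground).matroid with hNdef
      have hNInd : ∀ I, N.Indep I ↔ NI I := fun I => by
        rw [hNdef]; simp [IndepMatroid.ofFinite]
      have hNE : N.E = M.E := by rw [hNdef]; simp [IndepMatroid.ofFinite]
      have hNfin : N.E.Finite := by rwa [hNE]
      -- rank of N
      obtain ⟨B0, hB0⟩ := M.exists_isBase
      obtain ⟨H0, ⟨hH0, hB0H⟩, -⟩ := h3 B0 hB0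
      obtain ⟨e0, he0E, he0H⟩ := Set.exists_of_ssubset
        (ssubset_of_subset_of_ne (h𝓗 H0 hH0) (fun h => hEH (h ▸ hH0)))
      have hJ0 : NI (insert e0 B0) := hstep B0 e0 H0 hB0 hH0 hB0H he0E he0H
      have he0B0 : e0 ∉ B0 := fun h => he0H (hB0H h)
      have hJ0card : (insert e0 B0).ncard = r + 1 := by
        rw [Set.ncard_insert_of_notMem he0B0 (hE.subset hB0.subset_ground)]
        rw [hbase_card _ hB0]
      have hmrkN : mrk N = r + 1 := by
        obtain ⟨BN, hBN, hJBN⟩ := ((hNInd _).mpr hJ0).exists_isBase_superset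
        rw [mrk_eq_ncard_base hBN]
        have hle := hNIcard BN ((hNInd _).mp hBN.indep)
        have hge : r + 1 ≤ BN.ncard := by
          rw [← hJ0card]
          exact Set.ncard_le_ncard hJBN (hNfin.subset hBN.subset_ground)
        omega
      have hTrunc : IsTruncationOf M N := by
        refine ⟨hNE.symm, fun I => ?_⟩
        rw [hmrkN, hNInd]
        constructor
        · intro hIM
          have := indep_ncard_le_mrk hE hIM
          exact ⟨Or.inl hIM, by omega⟩
        · rintro ⟨hNIi | hsec, hc⟩
          · exact hNIi
          · have := hNIsecond_card I hsec.1 hsec.2.1; omega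
      -- facts about members of 𝓗
      have hJH_ind : ∀ H ∈ 𝓗, ∀ J, NI J → J ⊆ H → M.Indep J ∧ J.ncard ≤ r := by
        rintro H hH J (hJM | ⟨-, -, hnot⟩) hJH
        · have := indep_ncard_le_mrk hE hJM
          exact ⟨hJM, by omega⟩
        · exact absurd hJH (hnot H hH)
      have hflat : ∀ H ∈ 𝓗, N.IsFlat H ∧ mrnk N H = r := by
        intro H hH
        have hHN : H ⊆ N.E := hNE ▸ h𝓗 H hH
        -- a base of M inside H
        obtain ⟨IH, hIH⟩ := M.exists_isBasis H (h𝓗 H hH)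
        have hIHcard : IH.ncard = r := by
          have := h1 H hH; rwa [mrnk_eq_ncard_basis hE hIH] at this
        have hIHbase : M.IsBase IH := base_of_indep_mrk_le hE hIH.indep
          (by rw [hrk, hIHcard])
        have hHeq : H = (h3 IH hIHbase).choose := by
          have hspec := (h3 IH hIHbase).choose_spec
          exact (h3 IH hIHbase).unique ⟨hH, hIH.subset⟩ hspec.1
        have hclH : N.closure H ⊆ H := by
          obtain ⟨J, hJ⟩ := N.exists_isBasis H hHN
          obtain ⟨hJM, hJr⟩ := hJH_ind H hH J ((hNInd J).mp hJ.indep) hJ.subset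
          intro e he
          rw [← hJ.closure_eq_closure] at he
          by_cases heJ : e ∈ J
          · exact hJ.subset heJ
          · have heE : e ∈ M.E := hNE ▸ N.closure_subset_ground _ he
            have hNdep : N.Dep (insert e J) :=
              (hJ.indep.mem_closure_iff_of_notMem heJ).mp he
            have hnin : ¬ NI (insert e J) := fun h => hNdep.not_indep ((hNInd _).mpr h)
            by_cases hJr' : J.ncard = r
            · have hJbase : M.IsBase J := base_of_indep_mrk_le hE hJM (by omega)
              have hall : ¬ ∀ H' ∈ 𝓗, ¬ insert e J ⊆ H' := by
                intro hall
                exact hnin (Or.inr ⟨Set.insert_subset heE hJM.subset_ground,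
                  ⟨e, Set.mem_insert _ _, by rwa [Set.insert_diff_self_of_notMem heJ]⟩,
                  hall⟩)
              push_neg at hall
              obtain ⟨H', hH', hsub⟩ := hall
              have : H' = H := (h3 J hJbase).unique
                ⟨hH', (Set.subset_insert _ _).trans hsub⟩ ⟨hH, hJ.subset⟩
              exact this ▸ hsub (Set.mem_insert _ _)
            · have hMdep : ¬ M.Indep (insert e J) := fun h => hnin (Or.inl h)
              have hecl : e ∈ M.closure J := by
                by_contra hecl
                exact hMdep ((hJM.insert_indep_iff_of_notMem heJ).mpr ⟨heE, hecl⟩)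
              refine h2 H hH J hJ.subset ?_ hecl
              have hJfin : J.Finite := hE.subset hJM.subset_ground
              rw [← hJfin.cast_ncard_eq]
              exact_mod_cast by omega
        have hHflat : N.IsFlat H := by
          have hcl : N.closure H = H := hclH.antisymm (N.subset_closure H hHN)
          rw [← hcl]; exact flat_closure N H
        refine ⟨hHflat, ?_⟩
        obtain ⟨J', hJ', hIJ'⟩ := (((hNInd IH).mpr (Or.inl hIH.indep)).subset_isBasis_of_subset
          hIH.subset hHN)
        obtain ⟨-, hJ'r⟩ := hJH_ind H hH J' ((hNInd J').mp hJ'.indep) hJ'.subset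
        have hge : r ≤ J'.ncard := by
          rw [← hIHcard]
          exact Set.ncard_le_ncard hIJ' (hNfin.subset hJ'.indep.subset_ground)
        rw [mrnk_eq_ncard_basis hNfin hJ']
        omega
      refine ⟨N, Or.inl hTrunc, ?_⟩
      ext F
      simp only [Set.mem_setOf_eq]
      constructor
      · intro hF; exact hflat F hF
      · rintro ⟨hFf, hFr⟩
        obtain ⟨I, hI⟩ := N.exists_isBasis F hFf.subset_ground
        have hIcard : I.ncard = r := by
          rw [mrnk_eq_ncard_basis hNfin hI] at hFr; exact hFr
        have hIM : M.Indep I := by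
          rcases (hNInd I).mp hI.indep with h | hsec
          · exact h
          · have := hNIsecond_card I hsec.1 hsec.2.1; omega
        have hIbase : M.IsBase I := base_of_indep_mrk_le hE hIM (by omega)
        obtain ⟨HF, ⟨hHF, hIHF⟩, -⟩ := h3 I hIbase
        have hFH : F ⊆ HF := by
          refine hI.subset_closure.trans ?_
          intro e he
          by_cases heI : e ∈ I
          · exact hIHF heI
          · have heE : e ∈ M.E := hNE ▸ N.closure_subset_ground _ he
            have hNdep : N.Dep (insert e I) :=
              (hI.indep.mem_closure_iff_of_notMem heI).mp he
            have hnin : ¬ NI (insert e I) := fun h => hNdep.not_indep ((hNInd _).mpr h)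
            have hall : ¬ ∀ H' ∈ 𝓗, ¬ insert e I ⊆ H' := by
              intro hall
              exact hnin (Or.inr ⟨Set.insert_subset heE hIM.subset_ground,
                ⟨e, Set.mem_insert _ _, by rwa [Set.insert_diff_self_of_notMem heI]⟩,
                hall⟩)
            push_neg at hall
            obtain ⟨H', hH', hsub⟩ := hall
            have : H' = HF := (h3 I hIbase).unique
              ⟨hH', (Set.subset_insert _ _).trans hsub⟩ ⟨hHF, hIHF⟩
            exact this ▸ hsub (Set.mem_insert _ _)
        have hHFN : HF ⊆ N.E := hNE ▸ h𝓗 HF hHF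
        obtain ⟨hHFf, hHFr⟩ := hflat HF hHF
        obtain ⟨J', hJ', hIJ'⟩ := hI.indep.subset_isBasis_of_subset hIHF hHFN
        have hJ'card : J'.ncard = r := by
          rw [mrnk_eq_ncard_basis hNfin hJ'] at hHFr; exact hHFr
        have hIJ : I = J' := eq_of_subset_of_ncard_le hIJ' (by omega)
          (hNfin.subset hJ'.indep.subset_ground)
        have hHFsub : HF ⊆ F := by
          refine hJ'.subset_closure.trans ?_
          rw [← hIJ, ← hFf.closure]
          exact N.closure_subset_closure hI.subset
        rwa [hFH.antisymm hHFsub]
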